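/- For a symmetric real matrix R with eigendecomposition R = QΛQ^T where Λ = diag(λ_1,…,λ_n) with |λ_1| ≥ … ≥ |λ_n| ≥ 0 and all λ_i ≥ 0 for i ≤ d, the matrix U = Q_d √(Λ_d) (columns of Q corresponding to the d largest-magnitude eigenvalues, scaled by square roots of the eigenvalues) minimizes ‖UU^T − R‖_F over all n×d matrices U, provided λ_1,…,λ_d are the d largest eigenvalues and they are nonnegative; i.e., this is an optimal rank-≤d positive-semidefinite approximation of R in Frobenius norm among matrices of the form UU^T. -/

import Mathlib

open Matrix BigOperators

lemma sumsq_eq_trace {n : ℕ} (A : Matrix (Fin n) (Fin n) ℝ) :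
    ∑ a, ∑ b, A a b ^ 2 = Matrix.trace (Aᵀ * A) := by
  rw [Matrix.trace, Finset.sum_comm]
  refine Finset.sum_congr rfl fun b _ => ?_
  simp [Matrix.diag, Matrix.mul_apply, sq]

lemma frob_conj {n : ℕ} (Q M : Matrix (Fin n) (Fin n) ℝ)
    (h1 : Qᵀ * Q = 1) :
    ∑ a, ∑ b, (Q * M * Qᵀ) a b ^ 2 = ∑ a, ∑ b, M a b ^ 2 := by
  rw [sumsq_eq_trace, sumsq_eq_trace]
  have h1' : ∀ X : Matrix (Fin n) (Fin n) ℝ, Qᵀ * (Q * X) = X := by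
    intro X; rw [← Matrix.mul_assoc, h1, Matrix.one_mul]
  have e1 : (Q * M * Qᵀ)ᵀ = Q * Mᵀ * Qᵀ := by
    simp [Matrix.transpose_mul, Matrix.mul_assoc]
  have this1 : (Q * M * Qᵀ)ᵀ * (Q * M * Qᵀ) = Q * (Mᵀ * M) * Qᵀ := by
    rw [e1]; simp only [Matrix.mul_assoc, h1']
  rw [this1, Matrix.trace_mul_comm (Q * (Mᵀ * M)) Qᵀ, ← Matrix.mul_assoc, ← Matrix.mul_assoc,
    h1, Matrix.one_mul]

lemma sum_dotProduct' {n m : ℕ} (f : Fin m → Fin n → ℝ) (v : Fin n → ℝ) :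
    (∑ k, f k) ⬝ᵥ v = ∑ k, f k ⬝ᵥ v := by
  simp only [dotProduct, Finset.sum_apply, Finset.sum_mul]
  exact Finset.sum_comm

lemma dotProduct_sum' {n m : ℕ} (f : Fin m → Fin n → ℝ) (v : Fin n → ℝ) :
    v ⬝ᵥ (∑ k, f k) = ∑ k, v ⬝ᵥ f k := by
  simp only [dotProduct, Finset.sum_apply, Finset.mul_sum]
  exact Finset.sum_comm

lemma bessel {n m : ℕ} (w : Fin m → Fin n → ℝ)
    (horth : ∀ k l, w k ⬝ᵥ w l = if k = l then 1 else 0)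
    (x : Fin n → ℝ) : ∑ k, (x ⬝ᵥ w k) ^ 2 ≤ x ⬝ᵥ x := by
  set c : Fin m → ℝ := fun k => x ⬝ᵥ w k with hc
  set s : Fin n → ℝ := ∑ k, c k • w k with hs
  have hsv : ∀ v, s ⬝ᵥ v = ∑ k, c k * (w k ⬝ᵥ v) := by
    intro v; rw [hs, sum_dotProduct']
    exact Finset.sum_congr rfl fun k _ => by rw [smul_dotProduct, smul_eq_mul]
  have hvs : ∀ v, v ⬝ᵥ s = ∑ k, c k * (v ⬝ᵥ w k) := by
    intro v; rw [hs, dotProduct_sum']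
    exact Finset.sum_congr rfl fun k _ => by rw [dotProduct_smul, smul_eq_mul]
  have hsx : s ⬝ᵥ x = ∑ k, c k ^ 2 := by
    rw [hsv]; exact Finset.sum_congr rfl fun k _ => by
      rw [dotProduct_comm, sq]
  have hxs : x ⬝ᵥ s = ∑ k, c k ^ 2 := by
    rw [hvs]; exact Finset.sum_congr rfl fun k _ => by rw [sq]
  have hss : s ⬝ᵥ s = ∑ k, c k ^ 2 := by
    rw [hsv]
    refine Finset.sum_congr rfl fun k _ => ?_
    rw [hvs]
    rw [Finset.sum_eq_single k]
    · rw [horth]; simp [sq]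
    · intro l _ hl; rw [horth]; simp [Ne.symm hl]
    · simp
  have h0 : (0:ℝ) ≤ (x - s) ⬝ᵥ (x - s) := Finset.sum_nonneg fun i _ => mul_self_nonneg _
  have hexp : (x - s) ⬝ᵥ (x - s) = x ⬝ᵥ x - ∑ k, c k ^ 2 := by
    rw [sub_dotProduct, dotProduct_sub, dotProduct_sub, hsx, hxs, hss]
    ring
  have := hexp ▸ h0
  linarith

lemma filter_eq_map {n d : ℕ} (hd : d ≤ n) :
    Finset.univ.filter (fun i : Fin n => (i : ℕ) < d) =
      Finset.map ⟨Fin.castLE hd, Fin.castLE_injective hd⟩ Finset.univ := by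
  ext i
  simp only [Finset.mem_filter, Finset.mem_univ, true_and, Finset.mem_map,
    Function.Embedding.coeFn_mk]
  constructor
  · intro h; exact ⟨⟨(i : ℕ), h⟩, by simp [Fin.ext_iff]⟩
  · rintro ⟨j, rfl⟩; exact j.isLt

lemma filter_card_lt {n d : ℕ} (hd : d ≤ n) :
    (Finset.univ.filter (fun i : Fin n => (i : ℕ) < d)).card = d := by
  rw [filter_eq_map hd, Finset.card_map, Finset.card_univ, Fintype.card_fin]

lemma sum_fin_lt {n d : ℕ} (hd : d ≤ n) (g : Fin n → ℝ) :
    ∑ i : Fin n, (if (i : ℕ) < d then g i else 0) = ∑ j : Fin d, g (Fin.castLE hd j) := by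
  rw [← Finset.sum_filter, filter_eq_map hd, Finset.sum_map]
  rfl

lemma key_weighted {n d : ℕ} (μ p : Fin n → ℝ) (hμ0 : ∀ i, 0 ≤ μ i)
    (hmono : ∀ i j : Fin n, i ≤ j → μ j ≤ μ i)
    (hp0 : ∀ i, 0 ≤ p i) (hp1 : ∀ i, p i ≤ 1)
    (hps : (n : ℝ) - d ≤ ∑ i, p i) :
    ∑ i : Fin n, (if (i : ℕ) < d then 0 else μ i) ≤ ∑ i, μ i * p i := by
  by_cases hdn : n ≤ d
  · have hz : ∀ i : Fin n, (if (i : ℕ) < d then (0:ℝ) else μ i) = 0 := by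
      intro i; simp [lt_of_lt_of_le i.isLt hdn]
    rw [Finset.sum_congr rfl fun i _ => hz i, Finset.sum_const, smul_zero]
    exact Finset.sum_nonneg fun i _ => mul_nonneg (hμ0 i) (hp0 i)
  push_neg at hdn
  have hcardS : (Finset.univ.filter (fun i : Fin n => (i : ℕ) < d)).card = d :=
    filter_card_lt (le_of_lt hdn)
  have hcardT : (Finset.univ.filter (fun i : Fin n => ¬ (i : ℕ) < d)).card = n - d := by
    have h2 := Finset.card_filter_add_card_filter_not
      (s := (Finset.univ : Finset (Fin n))) (p := fun i : Fin n => (i : ℕ) < d)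
    rw [Finset.card_univ, Fintype.card_fin, hcardS] at h2
    omega
  set c : ℝ := μ ⟨d, hdn⟩ with hcdef
  set S := Finset.univ.filter (fun i : Fin n => (i : ℕ) < d) with hS
  set T := Finset.univ.filter (fun i : Fin n => ¬ (i : ℕ) < d) with hT
  have hLHS : ∑ i : Fin n, (if (i : ℕ) < d then (0:ℝ) else μ i) = ∑ i ∈ T, μ i := by
    rw [← Finset.sum_filter_add_sum_filter_not Finset.univ (fun i : Fin n => (i : ℕ) < d)]
    rw [Finset.sum_congr rfl (fun i hi => if_pos (Finset.mem_filter.mp hi).2),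
      Finset.sum_const, smul_zero, zero_add]
    exact Finset.sum_congr rfl fun i hi => if_neg (Finset.mem_filter.mp hi).2
  have hRHS : ∑ i, μ i * p i = ∑ i ∈ S, μ i * p i + ∑ i ∈ T, μ i * p i :=
    (Finset.sum_filter_add_sum_filter_not Finset.univ _ _).symm
  have hpsplit : ∑ i, p i = ∑ i ∈ S, p i + ∑ i ∈ T, p i :=
    (Finset.sum_filter_add_sum_filter_not Finset.univ _ _).symm
  have hc0 : 0 ≤ c := hμ0 _
  have hμS : ∀ i ∈ S, c ≤ μ i := by
    intro i hi
    have : (i : ℕ) < d := (Finset.mem_filter.mp hi).2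
    exact hmono i ⟨d, hdn⟩ (by simpa [Fin.le_def] using le_of_lt this)
  have hμT : ∀ i ∈ T, μ i ≤ c := by
    intro i hi
    have : d ≤ (i : ℕ) := le_of_not_gt (Finset.mem_filter.mp hi).2
    exact hmono ⟨d, hdn⟩ i (by simpa [Fin.le_def] using this)
  have hbal : ∑ i ∈ T, (1 - p i) ≤ ∑ i ∈ S, p i := by
    have h1 : ∑ i ∈ T, (1 - p i) = (↑(n - d) : ℝ) - ∑ i ∈ T, p i := by
      rw [Finset.sum_sub_distrib, Finset.sum_const, hcardT]; simp
    have hnd : ((n - d : ℕ) : ℝ) = (n : ℝ) - d := by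
      rw [Nat.cast_sub (le_of_lt hdn)]
    rw [h1, hnd]
    have h3 := hps
    rw [hpsplit] at h3
    linarith
  have step1 : ∑ i ∈ T, μ i * (1 - p i) ≤ c * ∑ i ∈ T, (1 - p i) := by
    rw [Finset.mul_sum]
    exact Finset.sum_le_sum fun i hi =>
      mul_le_mul_of_nonneg_right (hμT i hi) (by linarith [hp1 i])
  have step2 : c * ∑ i ∈ S, p i ≤ ∑ i ∈ S, μ i * p i := by
    rw [Finset.mul_sum]
    exact Finset.sum_le_sum fun i hi =>
      mul_le_mul_of_nonneg_right (hμS i hi) (hp0 i)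
  have step3 : c * ∑ i ∈ T, (1 - p i) ≤ c * ∑ i ∈ S, p i :=
    mul_le_mul_of_nonneg_left hbal hc0
  have hTsplit : ∑ i ∈ T, μ i = ∑ i ∈ T, μ i * p i + ∑ i ∈ T, μ i * (1 - p i) := by
    rw [← Finset.sum_add_distrib]
    exact Finset.sum_congr rfl fun i _ => by ring
  rw [hLHS, hRHS]
  linarith

/-- Eckart–Young–Mirsky specialized to symmetric matrices.
Let `R = Q Λ Qᵀ` be an eigendecomposition of a real symmetric matrix `R`, with `Q`
orthogonal and the eigenvalues `λ` sorted by decreasing magnitude. Suppose the first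
`d` eigenvalues are nonnegative and are the `d` largest eigenvalues. Then the matrix
`U₀ = Q_d √(Λ_d)` (the first `d` columns of `Q` scaled by square roots of the
corresponding eigenvalues) minimizes `‖U Uᵀ − R‖_F` over all `n × d` real matrices
`U` (squared Frobenius norm written as a sum of squared entries). -/
theorem eckart_young_symmetric (n d : ℕ) (hd : d ≤ n)
    (R Q : Matrix (Fin n) (Fin n) ℝ) (lam : Fin n → ℝ)
    (hR : R.IsSymm)
    (hQ : Q ∈ Matrix.orthogonalGroup (Fin n) ℝ)
    (hdecomp : R = Q * Matrix.diagonal lam * Qᵀ)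
    (hsorted : ∀ i j : Fin n, i ≤ j → |lam j| ≤ |lam i|)
    (htopnonneg : ∀ i : Fin n, (i : ℕ) < d → 0 ≤ lam i)
    (hlargest : ∀ i j : Fin n, (i : ℕ) < d → d ≤ (j : ℕ) → lam j ≤ lam i) :
    ∀ U : Matrix (Fin n) (Fin d) ℝ,
      (∑ a, ∑ b,
        ((Matrix.of fun i (j : Fin d) =>
            Q i (Fin.castLE hd j) * Real.sqrt (lam (Fin.castLE hd j))) *
         (Matrix.of fun i (j : Fin d) =>
            Q i (Fin.castLE hd j) * Real.sqrt (lam (Fin.castLE hd j)))ᵀ - R) a b ^ 2)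
      ≤ ∑ a, ∑ b, (U * Uᵀ - R) a b ^ 2 := by
  intro U
  -- orthogonality facts
  have hQ2 : Q * Qᵀ = 1 := by
    have := (Matrix.mem_orthogonalGroup_iff (Fin n) ℝ).mp hQ
    exact this
  have hQ1 : Qᵀ * Q = 1 := by
    have := (Matrix.mem_orthogonalGroup_iff' (Fin n) ℝ).mp hQ
    exact this
  have hQl : ∀ X : Matrix (Fin n) (Fin n) ℝ, Q * (Qᵀ * X) = X := fun X => by
    rw [← Matrix.mul_assoc, hQ2, Matrix.one_mul]
  -- ==================== LHS computation ====================
  set U₀ : Matrix (Fin n) (Fin d) ℝ := Matrix.of fun i (j : Fin d) =>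
      Q i (Fin.castLE hd j) * Real.sqrt (lam (Fin.castLE hd j)) with hU₀
  set f : Fin n → ℝ := fun i => if (i : ℕ) < d then lam i else 0 with hf
  have hU0 : U₀ * U₀ᵀ = Q * Matrix.diagonal f * Qᵀ := by
    ext a b
    rw [Matrix.mul_apply, Matrix.mul_apply]
    have hcol : ∀ i : Fin n, (Q * Matrix.diagonal f) a i = Q a i * f i := fun i =>
      Matrix.mul_diagonal f Q a i
    calc ∑ j : Fin d, U₀ a j * U₀ᵀ j b
        = ∑ j : Fin d, (fun i : Fin n => Q a i * lam i * Q b i) (Fin.castLE hd j) := by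
          refine Finset.sum_congr rfl fun j _ => ?_
          have hnn : 0 ≤ lam (Fin.castLE hd j) := htopnonneg _ (by simp [j.isLt])
          simp only [hU₀, Matrix.transpose_apply, Matrix.of_apply]
          rw [show Q a (Fin.castLE hd j) * Real.sqrt (lam (Fin.castLE hd j)) *
              (Q b (Fin.castLE hd j) * Real.sqrt (lam (Fin.castLE hd j))) =
              Q a (Fin.castLE hd j) * (Real.sqrt (lam (Fin.castLE hd j)) *
                Real.sqrt (lam (Fin.castLE hd j))) * Q b (Fin.castLE hd j) by ring,
            Real.mul_self_sqrt hnn]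
      _ = ∑ i : Fin n, (if (i : ℕ) < d then Q a i * lam i * Q b i else 0) :=
          (sum_fin_lt hd (fun i => Q a i * lam i * Q b i)).symm
      _ = ∑ i : Fin n, (Q * Matrix.diagonal f) a i * Qᵀ i b := by
          refine Finset.sum_congr rfl fun i _ => ?_
          rw [hcol, Matrix.transpose_apply, hf]
          by_cases h : (i : ℕ) < d <;> simp [h] <;> ring
  set g : Fin n → ℝ := fun i => f i - lam i with hg
  have hLHSmat : U₀ * U₀ᵀ - R = Q * Matrix.diagonal g * Qᵀ := by
    rw [hU0, hdecomp, hg, ← Matrix.diagonal_sub, Matrix.mul_sub, Matrix.sub_mul]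
  have hdiagsq : ∑ a, ∑ b, (Matrix.diagonal g) a b ^ 2
      = ∑ i : Fin n, (if (i : ℕ) < d then 0 else lam i ^ 2) := by
    refine Finset.sum_congr rfl fun a _ => ?_
    have : ∀ b, (Matrix.diagonal g) a b ^ 2 = if b = a then g a ^ 2 else 0 := by
      intro b
      by_cases h : a = b
      · subst h; simp [Matrix.diagonal_apply_eq]
      · rw [Matrix.diagonal_apply_ne _ h, if_neg (Ne.symm h)]; simp
    rw [Finset.sum_congr rfl fun b _ => this b, Finset.sum_ite_eq' Finset.univ a]
    simp only [Finset.mem_univ, if_true]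
    rw [hg, hf]
    by_cases h : (a : ℕ) < d <;> simp [h] <;> ring
  have hLHS : ∑ a, ∑ b, (U₀ * U₀ᵀ - R) a b ^ 2
      = ∑ i : Fin n, (if (i : ℕ) < d then 0 else lam i ^ 2) := by
    rw [hLHSmat, frob_conj Q _ hQ1, hdiagsq]
  -- ==================== RHS lower bound ====================
  set V : Matrix (Fin n) (Fin d) ℝ := Qᵀ * U with hV
  set B : Matrix (Fin n) (Fin n) ℝ := V * Vᵀ with hB
  set A : Matrix (Fin n) (Fin n) ℝ := B - Matrix.diagonal lam with hA
  have hRHSmat : U * Uᵀ - R = Q * A * Qᵀ := by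
    rw [hA, hdecomp, Matrix.mul_sub, Matrix.sub_mul, hB, hV]
    congr 1
    rw [Matrix.transpose_mul, Matrix.transpose_transpose]
    have hhh : Q * (Qᵀ * U * (Uᵀ * Q)) * Qᵀ = U * Uᵀ := by
      calc Q * (Qᵀ * U * (Uᵀ * Q)) * Qᵀ
          = Q * (Qᵀ * (U * (Uᵀ * (Q * Qᵀ)))) := by simp only [Matrix.mul_assoc]
        _ = Q * (Qᵀ * (U * Uᵀ)) := by rw [hQ2, Matrix.mul_one]
        _ = U * Uᵀ := hQl _
    exact hhh.symm
  have hRHS : ∑ a, ∑ b, (U * Uᵀ - R) a b ^ 2 = ∑ a, ∑ b, A a b ^ 2 := by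
    rw [hRHSmat, frob_conj Q _ hQ1]
  -- kernel of Vᵀ
  set K : Submodule ℝ (EuclideanSpace ℝ (Fin n)) :=
    LinearMap.ker (Matrix.toEuclideanLin Vᵀ) with hK
  set m : ℕ := Module.finrank ℝ K with hm
  have hmge : n - d ≤ m := by
    have hrn := LinearMap.finrank_range_add_finrank_ker (Matrix.toEuclideanLin Vᵀ)
    rw [finrank_euclideanSpace_fin] at hrn
    rw [← hK] at hrn
    rw [hm]
    have hrle : Module.finrank ℝ (LinearMap.range (Matrix.toEuclideanLin Vᵀ)) ≤ d := by
      have := Submodule.finrank_le (LinearMap.range (Matrix.toEuclideanLin Vᵀ))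
      rwa [finrank_euclideanSpace_fin] at this
    omega
  set ob := stdOrthonormalBasis ℝ K with hob
  set w : Fin m → Fin n → ℝ :=
    fun k => WithLp.equiv 2 (Fin n → ℝ) ((ob k : K) : EuclideanSpace ℝ (Fin n)) with hw
  have horth : ∀ k l, w k ⬝ᵥ w l = if k = l then 1 else 0 := by
    intro k l
    have h1 := ob.orthonormal
    rw [orthonormal_iff_ite] at h1
    have h2 := h1 k l
    rw [Submodule.coe_inner] at h2
    rw [← h2, PiLp.inner_apply]
    simp only [RCLike.inner_apply, conj_trivial]
    rw [dotProduct]; exact Finset.sum_congr rfl fun i _ => mul_comm _ _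
  have hker : ∀ k, Vᵀ *ᵥ w k = 0 := by
    intro k
    have h1 : Matrix.toEuclideanLin Vᵀ ((ob k : K) : EuclideanSpace ℝ (Fin n)) = 0 :=
      (ob k).2
    rw [Matrix.toEuclideanLin_apply] at h1
    have h2 := congrArg (WithLp.equiv 2 (Fin d → ℝ)) h1
    simp at h2; exact h2
  have hAw : ∀ k, A *ᵥ w k = fun i => -(lam i * w k i) := by
    intro k
    rw [hA, Matrix.sub_mulVec]
    have hBw : B *ᵥ w k = 0 := by
      rw [hB, ← Matrix.mulVec_mulVec, hker, Matrix.mulVec_zero]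
    rw [hBw]
    ext i
    simp [Matrix.mulVec_diagonal]
  set p : Fin n → ℝ := fun i => ∑ k, (w k i) ^ 2 with hp
  have hp0 : ∀ i, 0 ≤ p i := fun i => Finset.sum_nonneg fun k _ => sq_nonneg _
  have hp1 : ∀ i, p i ≤ 1 := by
    intro i
    have hb := bessel w horth (Pi.single i 1)
    have h1 : ∀ k, Pi.single i 1 ⬝ᵥ w k = w k i := by
      intro k
      rw [dotProduct]
      rw [Finset.sum_eq_single i]
      · simp
      · intro b _ hb'; simp [Pi.single_apply, Ne.symm hb']
      · simp
    have h2 : (Pi.single i (1:ℝ)) ⬝ᵥ (Pi.single i 1) = 1 := by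
      rw [dotProduct, Finset.sum_eq_single i]
      · simp
      · intro b _ hb'; simp [Pi.single_apply, Ne.symm hb']
      · simp
    rw [h2] at hb
    calc p i = ∑ k, (Pi.single i 1 ⬝ᵥ w k) ^ 2 := by
          exact Finset.sum_congr rfl fun k _ => by rw [h1]
      _ ≤ 1 := hb
  have hpsum : ∑ i, p i = (m : ℝ) := by
    rw [hp]
    rw [Finset.sum_comm]
    have : ∀ k, ∑ i, (w k i) ^ 2 = 1 := by
      intro k
      have h4 : w k ⬝ᵥ w k = 1 := by simpa using horth k k
      rw [← h4, dotProduct]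
      exact Finset.sum_congr rfl fun i _ => sq _
    rw [Finset.sum_congr rfl fun k _ => this k]
    simp
  have hps : (n : ℝ) - d ≤ ∑ i, p i := by
    rw [hpsum]
    have : ((n - d : ℕ) : ℝ) ≤ (m : ℝ) := Nat.cast_le.mpr hmge
    rw [Nat.cast_sub hd] at this
    linarith
  -- Bessel bound on ∑∑ A²
  have hmain : ∑ i, (lam i ^ 2) * p i ≤ ∑ a, ∑ b, A a b ^ 2 := by
    have hrow : ∀ a, ∑ k, ((A a) ⬝ᵥ w k) ^ 2 ≤ ∑ b, A a b ^ 2 := by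
      intro a
      have hb := bessel w horth (A a)
      have : A a ⬝ᵥ A a = ∑ b, A a b ^ 2 := by
        rw [dotProduct]; exact Finset.sum_congr rfl fun b _ => (sq _).symm
      rwa [this] at hb
    have h1 : ∑ a, ∑ k, ((A a) ⬝ᵥ w k) ^ 2 ≤ ∑ a, ∑ b, A a b ^ 2 :=
      Finset.sum_le_sum fun a _ => hrow a
    have h2 : ∑ a, ∑ k, ((A a) ⬝ᵥ w k) ^ 2 = ∑ i, (lam i ^ 2) * p i := by
      rw [Finset.sum_comm]
      have h3 : ∀ k a, (A a) ⬝ᵥ w k = -(lam a * w k a) := by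
        intro k a
        have := congrFun (hAw k) a
        exact this
      calc ∑ k, ∑ a, ((A a) ⬝ᵥ w k) ^ 2
          = ∑ k, ∑ a, lam a ^ 2 * (w k a) ^ 2 := by
            refine Finset.sum_congr rfl fun k _ => Finset.sum_congr rfl fun a _ => ?_
            rw [h3]; ring
        _ = ∑ a, ∑ k, lam a ^ 2 * (w k a) ^ 2 := Finset.sum_comm
        _ = ∑ i, (lam i ^ 2) * p i := by
            refine Finset.sum_congr rfl fun a _ => ?_
            rw [hp, Finset.mul_sum]
    linarith
  -- monotonicity of lam²
  have hmono : ∀ i j : Fin n, i ≤ j → lam j ^ 2 ≤ lam i ^ 2 := by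
    intro i j hij
    rw [← sq_abs (lam j), ← sq_abs (lam i)]
    exact pow_le_pow_left₀ (abs_nonneg _) (hsorted i j hij) 2
  have hkey := key_weighted (d := d) (fun i => lam i ^ 2) p
    (fun i => sq_nonneg _) hmono hp0 hp1 hps
  rw [hLHS, hRHS]
  calc ∑ i : Fin n, (if (i : ℕ) < d then 0 else lam i ^ 2)
      ≤ ∑ i, (lam i ^ 2) * p i := hkey
    _ ≤ ∑ a, ∑ b, A a b ^ 2 := hmain
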